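/- For every numeric planning problem Π, every pattern ≺ and every total order < of the actions of Π that is compatible with ≺ (i.e., <, seen as a sequence of actions, can be obtained from ≺ by removing zero or more actions), the pattern ≺-encoding Π^≺ dominates the R²∃ <-encoding Π^<: for every bound n ≥ 0, if Π^<_n is satisfiable then Π^≺_n is satisfiable. -/

import Mathlib

open scoped Classical

namespace PatternPlanning

/-! ## Numeric planning problems -/

/-- A linear expression `∑ w, coeff w * w + const` over the numeric variables `VN`. -/
structure LinExpr (VN : Type) where
  coeff : VN → ℚ
  const : ℚ

/-- Value of a linear expression under a numeric valuation. -/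
def LinExpr.eval {VN : Type} [Fintype VN] (e : LinExpr VN) (ν : VN → ℚ) : ℚ :=
  (∑ w, e.coeff w * ν w) + e.const

/-- The comparison operators `≥ , > , =` of numeric conditions `ψ ⊵ 0`. -/
inductive CompOp : Type
  | ge | gt | eq

/-- `op.holds q` means `q ⊵ 0`. -/
def CompOp.holds : CompOp → ℚ → Prop
  | .ge, q => 0 ≤ q
  | .gt, q => 0 < q
  | .eq, q => q = 0

/-- A numeric condition `ψ ⊵ 0`. -/
structure NumCond (VN : Type) where
  expr : LinExpr VN
  op : CompOp

def NumCond.holds {VN : Type} [Fintype VN] (c : NumCond VN) (ν : VN → ℚ) : Prop :=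
  c.op.holds (c.expr.eval ν)

/-- A propositional condition `v = ⊤` or `v = ⊥`. -/
inductive PropCond (VB : Type)
  | isTrue (v : VB)
  | isFalse (v : VB)

def PropCond.holds {VB : Type} : PropCond VB → (VB → Bool) → Prop
  | .isTrue v, β => β v = true
  | .isFalse v, β => β v = false

/-- An action: propositional and numeric preconditions, Boolean effects `v := ⊤/⊥`
and numeric effects `w := ψ` (each variable assigned at most once, enforced by
the functional representation of the effects). -/
structure Act (VB VN : Type) where
  preB : List (PropCond VB)
  preN : List (NumCond VN)
  effB : VB → Option Bool
  effN : VN → Option (LinExpr VN)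

def Act.assignsB {VB VN : Type} (a : Act VB VN) (v : VB) : Prop := a.effB v ≠ none
def Act.assignsN {VB VN : Type} (a : Act VB VN) (x : VN) : Prop := a.effN x ≠ none

/-- The effect `x := e` is a linear increment `x += ψ` : `e = x + ψ` with `ψ` not
containing any variable assigned by `a`. -/
def Act.isIncr {VB VN : Type} (a : Act VB VN) (x : VN) (e : LinExpr VN) : Prop :=
  e.coeff x = 1 ∧ ∀ y, a.assignsN y → y ≠ x → e.coeff y = 0

/-- The increment part `ψ` of a linear increment `x := x + ψ`. -/
noncomputable def incrPart {VN : Type} (e : LinExpr VN) (x : VN) : LinExpr VN :=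
  ⟨Function.update e.coeff x 0, e.const⟩

/-- The (general) assignment `x := e` is simple: `e` contains no variable assigned by `a`. -/
def Act.isSimpleA {VB VN : Type} (a : Act VB VN) (e : LinExpr VN) : Prop :=
  ∀ y, a.assignsN y → e.coeff y = 0

/-- An action is eligible for rolling. -/
def Act.eligible {VB VN : Type} (a : Act VB VN) : Prop :=
  (∀ v, PropCond.isFalse v ∈ a.preB → a.effB v ≠ some true) ∧
  (∀ v, PropCond.isTrue v ∈ a.preB → a.effB v ≠ some false) ∧
  (∀ x e, a.effN x = some e → a.isIncr x e ∨ a.isSimpleA e) ∧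
  (∃ x e, a.effN x = some e ∧ a.isIncr x e)

/-- A state: values of the Boolean and numeric variables. -/
structure PState (VB VN : Type) where
  boolVal : VB → Bool
  numVal : VN → ℚ

/-- `a` is executable in `s`: all preconditions of `a` hold in `s`. -/
def Act.execIn {VB VN : Type} [Fintype VN] (a : Act VB VN) (s : PState VB VN) : Prop :=
  (∀ c ∈ a.preB, c.holds s.boolVal) ∧ (∀ c ∈ a.preN, c.holds s.numVal)

/-- The result of executing `a` in `s`. -/
def Act.result {VB VN : Type} [Fintype VN] (a : Act VB VN) (s : PState VB VN) : PState VB VN where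
  boolVal := fun v => (a.effB v).getD (s.boolVal v)
  numVal := fun x =>
    match a.effN x with
    | none => s.numVal x
    | some e => e.eval s.numVal

/-- Execution of a sequence of actions: `some` of the last induced state if the
sequence is executable, `none` otherwise. -/
noncomputable def execSeq {VB VN A : Type} [Fintype VN] (acts : A → Act VB VN) :
    List A → PState VB VN → Option (PState VB VN)
  | [], s => some s
  | a :: rest, s =>
      if (acts a).execIn s then execSeq acts rest ((acts a).result s) else none

/-- Goal formulas: propositional combinations of propositional and numeric conditions. -/
inductive Formula (VB VN : Type)
  | prop (c : PropCond VB)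
  | num (c : NumCond VN)
  | not (f : Formula VB VN)
  | and (f g : Formula VB VN)
  | or (f g : Formula VB VN)

def Formula.holds {VB VN : Type} [Fintype VN] :
    Formula VB VN → (VB → Bool) → (VN → ℚ) → Prop
  | .prop c, β, _ => c.holds β
  | .num c, _, ν => c.holds ν
  | .not f, β, ν => ¬ f.holds β ν
  | .and f g, β, ν => f.holds β ν ∧ g.holds β ν
  | .or f g, β, ν => f.holds β ν ∨ g.holds β ν

/-- A numeric planning problem `Π = ⟨V_B, V_N, A, I, G⟩` (the sets of variables and
of actions are the types `VB`, `VN`, `A`). -/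
structure Problem (VB VN A : Type) where
  acts : A → Act VB VN
  init : PState VB VN
  goals : List (Formula VB VN)

def Problem.goalSat {VB VN A : Type} [Fintype VN] (P : Problem VB VN A)
    (β : VB → Bool) (ν : VN → ℚ) : Prop :=
  ∀ f ∈ P.goals, f.holds β ν

/-- `α` is a valid plan for `P`. -/
def Problem.isPlan {VB VN A : Type} [Fintype VN] (P : Problem VB VN A) (α : List A) : Prop :=
  ∃ s, execSeq P.acts α P.init = some s ∧ P.goalSat s.boolVal s.numVal

def Problem.hasPlan {VB VN A : Type} [Fintype VN] (P : Problem VB VN A) : Prop :=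
  ∃ α, P.isPlan α

/-! ## ψ[a] : rolled substitution -/

/-- Value of the variable `x` in `ψ[a]` when the action variable of `a` takes value `k`:
`x + (k-1)·ψ₁` for a linear increment `x += ψ₁`, `ψ₁` for a simple assignment `x := ψ₁`,
`x` otherwise. -/
noncomputable def rolledVarVal {VB VN : Type} [Fintype VN] (a : Act VB VN) (k : ℕ)
    (ν : VN → ℚ) (x : VN) : ℚ :=
  match a.effN x with
  | none => ν x
  | some e =>
      if a.isIncr x e then ν x + ((k : ℚ) - 1) * (incrPart e x).eval ν
      else if a.isSimpleA e then e.eval ν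
      else ν x

/-- Value of `ψ[a]` under `ν` when the action variable of `a` takes the value `k`. -/
noncomputable def rolledEval {VB VN : Type} [Fintype VN] (a : Act VB VN) (k : ℕ)
    (ψ : LinExpr VN) (ν : VN → ℚ) : ℚ :=
  (∑ x, ψ.coeff x * rolledVarVal a k ν x) + ψ.const

/-! ## The rolled-up encoding Π^R and the standard encoding Π^S -/

def occursInPre {VB VN : Type} (a : Act VB VN) (x : VN) : Prop :=
  ∃ c ∈ a.preN, c.expr.coeff x ≠ 0

def occursInEff {VB VN : Type} (a : Act VB VN) (x : VN) : Prop :=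
  a.assignsN x ∨ ∃ y e, a.effN y = some e ∧ e.coeff x ≠ 0

/-- Condition under which `mutex^R(A)` contains `a₁ = 0 ∨ a₂ = 0`. -/
def mutexCond {VB VN : Type} (a₁ a₂ : Act VB VN) : Prop :=
  (∃ v, PropCond.isFalse v ∈ a₁.preB ∧ a₂.effB v = some true) ∨
  (∃ v, PropCond.isTrue v ∈ a₁.preB ∧ a₂.effB v = some false) ∨
  (∃ x, a₁.assignsN x ∧ (occursInEff a₂ x ∨ occursInPre a₂ x))

/-- The symbolic transition relation `T^R(X,A,X')` of the rolled-up encoding, as a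
predicate on the values `β,ν` for `X`, `u` for the (ℕ-valued) action variables `A`,
and `β',ν'` for `X'`. -/
def TR {VB VN A : Type} [Fintype VN] (P : Problem VB VN A)
    (β : VB → Bool) (ν : VN → ℚ) (u : A → ℕ) (β' : VB → Bool) (ν' : VN → ℚ) : Prop :=
  -- pre^R(A)
  (∀ a, 0 < u a →
    (∀ v, PropCond.isFalse v ∈ (P.acts a).preB → β v = false) ∧
    (∀ v, PropCond.isTrue v ∈ (P.acts a).preB → β v = true) ∧
    (∀ c ∈ (P.acts a).preN, c.op.holds (c.expr.eval ν))) ∧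
  (∀ a, 1 < u a → ∀ c ∈ (P.acts a).preN,
    c.op.holds (rolledEval (P.acts a) (u a) c.expr ν)) ∧
  -- eff^R(A)
  (∀ a, 0 < u a →
    (∀ v b, (P.acts a).effB v = some b → β' v = b) ∧
    (∀ x e, (P.acts a).effN x = some e →
      ((P.acts a).isIncr x e → ν' x = ν x + (u a : ℚ) * (incrPart e x).eval ν) ∧
      (¬ (P.acts a).isIncr x e → ν' x = e.eval ν))) ∧
  -- frame^R(V_B ∪ V_N)
  (∀ v, (∀ a, (P.acts a).assignsB v → u a = 0) → β' v = β v) ∧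
  (∀ x, (∀ a, (P.acts a).assignsN x → u a = 0) → ν' x = ν x) ∧
  -- mutex^R(A)
  (∀ a₁ a₂, a₁ ≠ a₂ → mutexCond (P.acts a₁) (P.acts a₂) → u a₁ = 0 ∨ u a₂ = 0) ∧
  -- amo^R(A)
  (∀ a, ¬ (P.acts a).eligible → u a ≤ 1)

/-- The symbolic transition relation `T^S` of the standard encoding: `T^R` plus
`a = 0 ∨ a = 1` for every action. -/
def TS {VB VN A : Type} [Fintype VN] (P : Problem VB VN A)
    (β : VB → Bool) (ν : VN → ℚ) (u : A → ℕ) (β' : VB → Bool) (ν' : VN → ℚ) : Prop :=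
  TR P β ν u β' ν' ∧ ∀ a, u a ≤ 1

/-- A (candidate) model of `Π^R_n` / `Π^S_n` : values for the `n+1` copies of the state
variables and the `n` copies of the ℕ-valued action variables. -/
structure RModel (VB VN A : Type) (n : ℕ) where
  β : Fin (n + 1) → VB → Bool
  ν : Fin (n + 1) → VN → ℚ
  u : Fin n → A → ℕ

def RModel.validWith {VB VN A : Type} {n : ℕ} [Fintype VN] (m : RModel VB VN A n)
    (P : Problem VB VN A)
    (T : (VB → Bool) → (VN → ℚ) → (A → ℕ) → (VB → Bool) → (VN → ℚ) → Prop) : Prop :=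
  m.β 0 = P.init.boolVal ∧ m.ν 0 = P.init.numVal ∧
  (∀ i : Fin n, T (m.β i.castSucc) (m.ν i.castSucc) (m.u i) (m.β i.succ) (m.ν i.succ)) ∧
  P.goalSat (m.β (Fin.last n)) (m.ν (Fin.last n))

/-- `m` is a model of `Π^R_n`. -/
def RModel.validR {VB VN A : Type} {n : ℕ} [Fintype VN] (m : RModel VB VN A n)
    (P : Problem VB VN A) : Prop :=
  m.validWith P (TR P)

/-- `m` is a model of `Π^S_n`. -/
def RModel.validS {VB VN A : Type} {n : ℕ} [Fintype VN] (m : RModel VB VN A n)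
    (P : Problem VB VN A) : Prop :=
  m.validWith P (TS P)

/-- The decoding of the rolled-up/standard encoding: the sequences in which each
action `a` occurs `u a` times consecutively. -/
def decodesRolled {A : Type} (u : A → ℕ) (α : List A) : Prop :=
  ∃ l : List A, l.Nodup ∧ (∀ a, a ∈ l) ∧
    α = l.flatMap (fun a => List.replicate (u a) a)

/-- The sequences of actions associated to the model `m` of `Π^R_n`/`Π^S_n`
(the set `(Π^R_n)⁻¹` is the union of `m.plans` over the models `m`). -/
def RModel.plans {VB VN A : Type} {n : ℕ} (m : RModel VB VN A n) (α : List A) : Prop :=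
  ∃ αs : Fin n → List A, (∀ i, decodesRolled (m.u i) (αs i)) ∧ α = (List.ofFn αs).flatten

/-- `Π^R_n` is satisfiable. -/
def satR {VB VN A : Type} [Fintype VN] (P : Problem VB VN A) (n : ℕ) : Prop :=
  ∃ m : RModel VB VN A n, m.validR P

/-- `Π^S_n` is satisfiable. -/
def satS {VB VN A : Type} [Fintype VN] (P : Problem VB VN A) (n : ℕ) : Prop :=
  ∃ m : RModel VB VN A n, m.validS P

/-! ## The R²∃ <-encoding Π^< -/

/-- Value of `v^{≪,·}` after chaining through the actions of `l`:
the last auxiliary variable of an action of `l` assigning `v`, else the initial value. -/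
noncomputable def chainB {VB VN A : Type} (acts : A → Act VB VN) (l : List A)
    (β : VB → Bool) (aux : A → VB → Bool) (v : VB) : Bool :=
  l.foldl (fun val b => if ((acts b).effB v).isSome then aux b v else val) (β v)

noncomputable def chainN {VB VN A : Type} (acts : A → Act VB VN) (l : List A)
    (ν : VN → ℚ) (aux : A → VN → ℚ) (x : VN) : ℚ :=
  l.foldl (fun val b => if ((acts b).effN x).isSome then aux b x else val) (ν x)

/-- The actions strictly preceding `a` in the total order `ord`. -/
noncomputable def before {A : Type} (ord : List A) (a : A) : List A :=
  ord.takeWhile (fun b => decide (b ≠ a))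

/-- The symbolic transition relation `T^<(X,A,X')` of the R²∃ `<`-encoding.
`actb` gives the values of the Boolean action variables, `auxB`/`auxN` the values of the
fresh state variables `v^a`. -/
def Tlt {VB VN A : Type} [Fintype VN] (P : Problem VB VN A) (ord : List A)
    (β : VB → Bool) (ν : VN → ℚ) (actb : A → Bool)
    (auxB : A → VB → Bool) (auxN : A → VN → ℚ)
    (β' : VB → Bool) (ν' : VN → ℚ) : Prop :=
  -- pre^<(A)
  (∀ a, actb a = true →
    (∀ v, PropCond.isFalse v ∈ (P.acts a).preB →
      chainB P.acts (before ord a) β auxB v = false) ∧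
    (∀ v, PropCond.isTrue v ∈ (P.acts a).preB →
      chainB P.acts (before ord a) β auxB v = true) ∧
    (∀ c ∈ (P.acts a).preN,
      c.op.holds (c.expr.eval (chainN P.acts (before ord a) ν auxN)))) ∧
  -- eff^<(A)
  (∀ a v b, (P.acts a).effB v = some b →
    (actb a = true → auxB a v = b) ∧
    (actb a = false → auxB a v = chainB P.acts (before ord a) β auxB v)) ∧
  (∀ a x e, (P.acts a).effN x = some e →
    (actb a = true → auxN a x = e.eval (chainN P.acts (before ord a) ν auxN)) ∧
    (actb a = false → auxN a x = chainN P.acts (before ord a) ν auxN x)) ∧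
  -- frame^<(V_B ∪ V_N)
  (∀ v, β' v = chainB P.acts ord β auxB v) ∧
  (∀ x, ν' x = chainN P.acts ord ν auxN x)

/-- A (candidate) model of `Π^<_n`. -/
structure LtModel (VB VN A : Type) (n : ℕ) where
  β : Fin (n + 1) → VB → Bool
  ν : Fin (n + 1) → VN → ℚ
  actb : Fin n → A → Bool
  auxB : Fin n → A → VB → Bool
  auxN : Fin n → A → VN → ℚ

def LtModel.valid {VB VN A : Type} {n : ℕ} [Fintype VN] (m : LtModel VB VN A n)
    (P : Problem VB VN A) (ord : List A) : Prop :=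
  m.β 0 = P.init.boolVal ∧ m.ν 0 = P.init.numVal ∧
  (∀ i : Fin n, Tlt P ord (m.β i.castSucc) (m.ν i.castSucc) (m.actb i)
      (m.auxB i) (m.auxN i) (m.β i.succ) (m.ν i.succ)) ∧
  P.goalSat (m.β (Fin.last n)) (m.ν (Fin.last n))

/-- The plan decoded from a model of `Π^<_n`: at each step, the actions of `ord`
whose Boolean action variable is true, in the order of `ord`. -/
def LtModel.plan {VB VN A : Type} {n : ℕ} (m : LtModel VB VN A n) (ord : List A) : List A :=
  (List.ofFn fun i : Fin n => ord.filter (m.actb i)).flatten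

/-- `Π^<_n` is satisfiable. -/
def satLt {VB VN A : Type} [Fintype VN] (P : Problem VB VN A) (ord : List A) (n : ℕ) : Prop :=
  ∃ m : LtModel VB VN A n, m.valid P ord

/-! ## The pattern ≺-encoding Π^≺ -/

/-- `σ^{≺₁}(v)` for Boolean `v`, where `≺₁` is the prefix of `pat` of length `j`
(`act j` is the value of the action variable of the `j`-th occurrence in the pattern). -/
noncomputable def sigB {VB VN A : Type} (acts : A → Act VB VN) (pat : List A)
    (act : ℕ → ℕ) (β : VB → Bool) : ℕ → VB → Bool
  | 0 => β
  | j + 1 => fun v =>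
      match pat[j]? with
      | none => sigB acts pat act β j v
      | some a =>
          match (acts a).effB v with
          | some true => sigB acts pat act β j v || decide (0 < act j)
          | some false => sigB acts pat act β j v && decide (act j = 0)
          | none => sigB acts pat act β j v

/-- `σ^{≺₁}(x)` for numeric `x` (`aux j` gives the values of the fresh variables
`x^{≺₁;a}` introduced for the general assignments of the `j`-th occurrence). -/
noncomputable def sigN {VB VN A : Type} [Fintype VN] (acts : A → Act VB VN) (pat : List A)
    (act : ℕ → ℕ) (aux : ℕ → VN → ℚ) (ν : VN → ℚ) : ℕ → VN → ℚ
  | 0 => ν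
  | j + 1 => fun x =>
      match pat[j]? with
      | none => sigN acts pat act aux ν j x
      | some a =>
          match (acts a).effN x with
          | none => sigN acts pat act aux ν j x
          | some e =>
              if (acts a).isIncr x e then
                sigN acts pat act aux ν j x +
                  (act j : ℚ) * (incrPart e x).eval (sigN acts pat act aux ν j)
              else aux j x

/-- The symbolic transition relation `T^≺(X,A,X')` of the pattern `≺`-encoding. -/
def Tpat {VB VN A : Type} [Fintype VN] (P : Problem VB VN A) (pat : List A)
    (β : VB → Bool) (ν : VN → ℚ) (act : ℕ → ℕ) (aux : ℕ → VN → ℚ)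
    (β' : VB → Bool) (ν' : VN → ℚ) : Prop :=
  (∀ (j : ℕ) (hj : j < pat.length),
    -- pre^≺(A)
    (∀ v, PropCond.isFalse v ∈ (P.acts (pat.get ⟨j, hj⟩)).preB → 0 < act j →
      sigB P.acts pat act β j v = false) ∧
    (∀ v, PropCond.isTrue v ∈ (P.acts (pat.get ⟨j, hj⟩)).preB → 0 < act j →
      sigB P.acts pat act β j v = true) ∧
    (∀ c ∈ (P.acts (pat.get ⟨j, hj⟩)).preN,
      (0 < act j → c.op.holds (c.expr.eval (sigN P.acts pat act aux ν j))) ∧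
      (1 < act j → c.op.holds
        (rolledEval (P.acts (pat.get ⟨j, hj⟩)) (act j) c.expr (sigN P.acts pat act aux ν j)))) ∧
    -- eff^≺(A) (for the general assignments)
    (∀ x e, (P.acts (pat.get ⟨j, hj⟩)).effN x = some e →
      ¬ (P.acts (pat.get ⟨j, hj⟩)).isIncr x e →
      (act j = 0 → aux j x = sigN P.acts pat act aux ν j x) ∧
      (0 < act j → aux j x = e.eval (sigN P.acts pat act aux ν j))) ∧
    -- amo^≺(A)
    (¬ (P.acts (pat.get ⟨j, hj⟩)).eligible → act j ≤ 1)) ∧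
  -- frame^≺(V_B ∪ V_N)
  (∀ v, β' v = sigB P.acts pat act β pat.length v) ∧
  (∀ x, ν' x = sigN P.acts pat act aux ν pat.length x)

/-- The sequence decoded from the values `act` of the action variables of the pattern:
the `j`-th occurrence repeated `act j` times, in the order of the pattern. -/
def decodePat {A : Type} (pat : List A) (act : ℕ → ℕ) : List A :=
  (List.ofFn fun j : Fin pat.length => List.replicate (act j.val) (pat.get j)).flatten

/-- A (candidate) model of `Π^≺_n`. -/
structure PatModel (VB VN A : Type) (n : ℕ) where
  β : Fin (n + 1) → VB → Bool
  ν : Fin (n + 1) → VN → ℚ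
  act : Fin n → ℕ → ℕ
  aux : Fin n → ℕ → VN → ℚ

def PatModel.valid {VB VN A : Type} {n : ℕ} [Fintype VN] (m : PatModel VB VN A n)
    (P : Problem VB VN A) (pat : List A) : Prop :=
  m.β 0 = P.init.boolVal ∧ m.ν 0 = P.init.numVal ∧
  (∀ i : Fin n, Tpat P pat (m.β i.castSucc) (m.ν i.castSucc) (m.act i) (m.aux i)
      (m.β i.succ) (m.ν i.succ)) ∧
  P.goalSat (m.β (Fin.last n)) (m.ν (Fin.last n))

/-- The plan decoded from a model of `Π^≺_n`. -/
def PatModel.plan {VB VN A : Type} {n : ℕ} (m : PatModel VB VN A n) (pat : List A) : List A :=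
  (List.ofFn fun i : Fin n => decodePat pat (m.act i)).flatten

/-- `Π^≺_n` is satisfiable. -/
def satPat {VB VN A : Type} [Fintype VN] (P : Problem VB VN A) (pat : List A) (n : ℕ) : Prop :=
  ∃ m : PatModel VB VN A n, m.valid P pat

/-! ## Abstract encodings -/

/-- An abstract encoding `Π^E = ⟨X, A, I(X), T(X,A,X'), G(X)⟩` of a problem:
`XAsgn` is the type of assignments to the state variables `X ⊇ V_B ∪ V_N`
(with projections giving the values of the variables of `V_B ∪ V_N`), `AAsgn` the type
of assignments to the action variables, `T` the symbolic transition relation and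
`decode` its decoding function, associating at least one action sequence to each model. -/
structure Encoding (VB VN A : Type) where
  XAsgn : Type
  AAsgn : Type
  projB : XAsgn → VB → Bool
  projN : XAsgn → VN → ℚ
  T : XAsgn → AAsgn → XAsgn → Prop
  decode : XAsgn → AAsgn → XAsgn → List A → Prop
  decode_exists : ∀ x u x', T x u x' → ∃ α, decode x u x' α

def Encoding.stateOf {VB VN A : Type} (E : Encoding VB VN A) (x : E.XAsgn) : PState VB VN :=
  ⟨E.projB x, E.projN x⟩

/-- The symbolic transition relation of `E` is correct: every action sequence
corresponding to a model of `T` is executable in the state given by the model and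
leads to the state given by the primed variables. -/
def Encoding.correctT {VB VN A : Type} [Fintype VN] (E : Encoding VB VN A)
    (P : Problem VB VN A) : Prop :=
  ∀ x u x', E.T x u x' → ∀ α, E.decode x u x' α →
    execSeq P.acts α (E.stateOf x) = some (E.stateOf x')

/-- A (candidate) model of `Π^E_n`. -/
structure EncModel {VB VN A : Type} (E : Encoding VB VN A) (n : ℕ) where
  xs : Fin (n + 1) → E.XAsgn
  us : Fin n → E.AAsgn

def EncModel.valid {VB VN A : Type} [Fintype VN] {E : Encoding VB VN A} {n : ℕ}
    (m : EncModel E n) (P : Problem VB VN A) : Prop :=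
  E.projB (m.xs 0) = P.init.boolVal ∧ E.projN (m.xs 0) = P.init.numVal ∧
  (∀ i : Fin n, E.T (m.xs i.castSucc) (m.us i) (m.xs i.succ)) ∧
  P.goalSat (E.projB (m.xs (Fin.last n))) (E.projN (m.xs (Fin.last n)))

/-- The action sequences associated to a model of `Π^E_n`
(`(Π^E_n)⁻¹` is the union of `m.plans` over the models `m` of `Π^E_n`). -/
def EncModel.plans {VB VN A : Type} {E : Encoding VB VN A} {n : ℕ}
    (m : EncModel E n) (α : List A) : Prop :=
  ∃ αs : Fin n → List A,
    (∀ i, E.decode (m.xs i.castSucc) (m.us i) (m.xs i.succ) (αs i)) ∧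
    α = (List.ofFn αs).flatten

/-- The quantity `Δ` for an action `a` and an expression `ψ`: the sum, over the linear
increments `x += ψ₁` of `a` with `x` occurring in `ψ`, of `ψ₁` weighted by the coefficient
of `x` in `ψ`. -/
noncomputable def deltaVal {VB VN : Type} [Fintype VN] (a : Act VB VN)
    (ψ : LinExpr VN) (ν : VN → ℚ) : ℚ :=
  ∑ x, ψ.coeff x *
    (match a.effN x with
     | some e => if a.isIncr x e then (incrPart e x).eval ν else 0
     | none => 0)

/-! ## Auxiliary lemmas for the proof -/

section Aux

variable {VB VN A : Type}

lemma chainB_concat (acts : A → Act VB VN) (l : List A) (a : A)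
    (β : VB → Bool) (aux : A → VB → Bool) (v : VB) :
    chainB acts (l ++ [a]) β aux v =
      if ((acts a).effB v).isSome then aux a v else chainB acts l β aux v := by
  simp [chainB, List.foldl_concat]

lemma chainN_concat (acts : A → Act VB VN) (l : List A) (a : A)
    (ν : VN → ℚ) (aux : A → VN → ℚ) (x : VN) :
    chainN acts (l ++ [a]) ν aux x =
      if ((acts a).effN x).isSome then aux a x else chainN acts l ν aux x := by
  simp [chainN, List.foldl_concat]

lemma takeWhile_ne_append {l₁ l₂ : List A} {a : A} (h : a ∉ l₁) :
    (l₁ ++ a :: l₂).takeWhile (fun b => decide (b ≠ a)) = l₁ := by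
  induction l₁ with
  | nil => simp [List.takeWhile]
  | cons b l₁ ih =>
      have hb : b ≠ a := fun hba => h (hba ▸ (List.mem_cons_self : b ∈ b :: l₁))
      have h' : a ∉ l₁ := fun hm => h (List.mem_cons_of_mem _ hm)
      have hbdec : (decide (b ≠ a)) = true := by simp [hb]
      rw [List.cons_append, List.takeWhile_cons, hbdec, if_pos rfl, ih h']

lemma before_eq_take {ord : List A} (hnd : ord.Nodup) (k : Fin ord.length) :
    before ord (ord.get k) = ord.take k := by
  have hdec : ord.drop k = ord.get k :: ord.drop (k + 1) :=
    List.drop_eq_getElem_cons k.isLt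
  have hsplit : ord = ord.take k ++ ord.get k :: ord.drop (k + 1) := by
    conv_lhs => rw [← List.take_append_drop k ord]
    rw [hdec]
  have hnotmem : ord.get k ∉ ord.take k := by
    intro hm
    have hnd' := hnd
    rw [hsplit, List.nodup_append] at hnd'
    exact hnd'.2.2 _ hm _ List.mem_cons_self rfl
  calc before ord (ord.get k)
      = (ord.take k ++ ord.get k :: ord.drop (k + 1)).takeWhile
          (fun b => decide (b ≠ ord.get k)) := by rw [before, ← hsplit]
    _ = ord.take k := takeWhile_ne_append hnotmem

lemma eval_incr [Fintype VN] (e : LinExpr VN) (x : VN) (h1 : e.coeff x = 1) (ν : VN → ℚ) :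
    e.eval ν = ν x + (incrPart e x).eval ν := by
  classical
  have hupd : (fun w => (Function.update e.coeff x 0) w * ν w)
      = Function.update (fun w => e.coeff w * ν w) x 0 := by
    funext w
    by_cases hw : w = x
    · subst hw; simp [Function.update_self]
    · simp [Function.update_of_ne hw]
  have hs : ∑ w, (incrPart e x).coeff w * ν w
      = ∑ w, Function.update (fun w => e.coeff w * ν w) x 0 w := by
    simp [incrPart, hupd]
  have hmem : x ∈ (Finset.univ : Finset VN) := Finset.mem_univ x
  rw [LinExpr.eval, LinExpr.eval, hs, Finset.sum_update_of_mem hmem]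
  have : ∑ w, e.coeff w * ν w
      = e.coeff x * ν x + ∑ w ∈ Finset.univ \ {x}, e.coeff w * ν w := by
    rw [← Finset.sum_update_of_mem hmem]
    congr 1
    funext w
    by_cases hw : w = x
    · subst hw; simp [Function.update_self]
    · simp [Function.update_of_ne hw]
  rw [this, h1, incrPart]
  ring

/-! ### The embedding machinery -/

noncomputable def embIdx {m p : ℕ} (f : Fin m ↪o Fin p) (j : ℕ) : Option (Fin m) :=
  if h : ∃ k : Fin m, (f k : ℕ) = j then some h.choose else none

lemma embIdx_some {m p : ℕ} {f : Fin m ↪o Fin p} {j : ℕ} {k : Fin m}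
    (h : embIdx f j = some k) : (f k : ℕ) = j := by
  unfold embIdx at h
  split at h
  · rename_i hex
    obtain rfl : hex.choose = k := Option.some.inj h
    exact hex.choose_spec
  · exact absurd h (by simp)

lemma embIdx_eq_some {m p : ℕ} (f : Fin m ↪o Fin p) {j : ℕ} {k : Fin m}
    (h : (f k : ℕ) = j) : embIdx f j = some k := by
  have hex : ∃ k : Fin m, (f k : ℕ) = j := ⟨k, h⟩
  have hch : hex.choose = k := by
    have h1 := hex.choose_spec
    have : f hex.choose = f k := Fin.val_injective (h1.trans h.symm)
    exact f.injective this
  simp [embIdx, hex, hch]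

lemma embIdx_none {m p : ℕ} {f : Fin m ↪o Fin p} {j : ℕ}
    (h : ∀ k : Fin m, (f k : ℕ) ≠ j) : embIdx f j = none := by
  simp only [embIdx]
  rw [dif_neg]
  rintro ⟨k, hk⟩
  exact h k hk

noncomputable def cnt {m p : ℕ} (f : Fin m ↪o Fin p) (j : ℕ) : ℕ :=
  (Finset.univ.filter (fun k : Fin m => (f k : ℕ) < j)).card

lemma cnt_zero {m p : ℕ} (f : Fin m ↪o Fin p) : cnt f 0 = 0 := by
  simp [cnt]

lemma cnt_succ_none {m p : ℕ} (f : Fin m ↪o Fin p) {j : ℕ}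
    (h : ∀ k : Fin m, (f k : ℕ) ≠ j) : cnt f (j + 1) = cnt f j := by
  unfold cnt
  congr 1
  apply Finset.filter_congr
  intro k _
  simp only [Nat.lt_succ_iff_lt_or_eq]
  have := h k
  constructor
  · rintro (h1 | h1)
    · exact h1
    · exact absurd h1 this
  · exact Or.inl

lemma cnt_succ_some {m p : ℕ} (f : Fin m ↪o Fin p) {j : ℕ} {k : Fin m}
    (h : (f k : ℕ) = j) : cnt f (j + 1) = cnt f j + 1 := by
  unfold cnt
  have hset : Finset.univ.filter (fun k' : Fin m => (f k' : ℕ) < j + 1)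
      = insert k (Finset.univ.filter (fun k' : Fin m => (f k' : ℕ) < j)) := by
    ext k'
    simp only [Finset.mem_filter, Finset.mem_univ, true_and, Finset.mem_insert,
      Nat.lt_succ_iff_lt_or_eq]
    constructor
    · rintro (h1 | h1)
      · exact Or.inr h1
      · left
        have : f k' = f k := Fin.val_injective (h1.trans h.symm)
        exact f.injective this
    · rintro (rfl | h1)
      · exact Or.inr h
      · exact Or.inl h1
  rw [hset, Finset.card_insert_of_notMem (by simp [h])]

lemma cnt_emb {m p : ℕ} (f : Fin m ↪o Fin p) {j : ℕ} {k : Fin m}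
    (h : (f k : ℕ) = j) : cnt f j = (k : ℕ) := by
  unfold cnt
  have hset : Finset.univ.filter (fun k' : Fin m => (f k' : ℕ) < j)
      = Finset.Iio k := by
    ext k'
    simp only [Finset.mem_filter, Finset.mem_univ, true_and, Finset.mem_Iio]
    rw [← h]
    constructor
    · intro h1
      have : f k' < f k := h1
      exact f.lt_iff_lt.mp this
    · intro h1
      exact f.lt_iff_lt.mpr h1
  rw [hset, Fin.card_Iio]

lemma cnt_top {m p : ℕ} (f : Fin m ↪o Fin p) : cnt f p = m := by
  unfold cnt
  have : Finset.univ.filter (fun k : Fin m => (f k : ℕ) < p) = Finset.univ := by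
    ext k
    simp [(f k).isLt]
  rw [this]
  simp

end Aux

lemma step_sim {VB VN A : Type} [Fintype VN]
    (P : Problem VB VN A) (pat ord : List A)
    (hnd : ord.Nodup) (hcompat : ord.Sublist pat)
    (β : VB → Bool) (ν : VN → ℚ) (actb : A → Bool)
    (auxB : A → VB → Bool) (auxN : A → VN → ℚ) (β' : VB → Bool) (ν' : VN → ℚ)
    (hT : Tlt P ord β ν actb auxB auxN β' ν') :
    ∃ act aux, Tpat P pat β ν act aux β' ν' := by
  classical
  obtain ⟨f, hf⟩ := List.sublist_iff_exists_fin_orderEmbedding_get_eq.mp hcompat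
  obtain ⟨hpre, heffB, heffN, hfrB, hfrN⟩ := hT
  set act : ℕ → ℕ := fun j =>
    (embIdx f j).elim 0 (fun k => if actb (ord.get k) then 1 else 0) with hactdef
  set aux : ℕ → VN → ℚ := fun j x =>
    (embIdx f j).elim (chainN P.acts (ord.take (cnt f j)) ν auxN x)
      (fun k => if actb (ord.get k) then auxN (ord.get k) x
                else chainN P.acts (ord.take (cnt f j)) ν auxN x) with hauxdef
  have hact_none : ∀ {j}, embIdx f j = none → act j = 0 := by
    intro j hE
    simp only [hactdef, hE, Option.elim_none]
  have hact_false : ∀ {j} {k}, embIdx f j = some k → actb (ord.get k) = false →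
      act j = 0 := by
    intro j k hE hb
    simp only [hactdef, hE, Option.elim_some]
    rw [hb]
    simp
  have hact_true : ∀ {j} {k}, embIdx f j = some k → actb (ord.get k) = true →
      act j = 1 := by
    intro j k hE hb
    simp only [hactdef, hE, Option.elim_some]
    rw [hb]
    simp
  have haux_none : ∀ {j} {x}, embIdx f j = none →
      aux j x = chainN P.acts (ord.take (cnt f j)) ν auxN x := by
    intro j x hE
    simp only [hauxdef, hE, Option.elim_none]
  have haux_false : ∀ {j} {k} {x}, embIdx f j = some k → actb (ord.get k) = false →
      aux j x = chainN P.acts (ord.take (cnt f j)) ν auxN x := by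
    intro j k x hE hb
    simp only [hauxdef, hE, Option.elim_some]
    rw [hb]
    simp
  have haux_true : ∀ {j} {k} {x}, embIdx f j = some k → actb (ord.get k) = true →
      aux j x = auxN (ord.get k) x := by
    intro j k x hE hb
    simp only [hauxdef, hE, Option.elim_some]
    rw [hb]
    simp
  have hactle : ∀ j, act j ≤ 1 := by
    intro j
    rcases hE : embIdx f j with _ | k
    · rw [hact_none hE]; omega
    · rcases hbb : actb (ord.get k) with _ | _
      · rw [hact_false hE hbb]; omega
      · rw [hact_true hE hbb]
  -- the key invariant
  have INV : ∀ j,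
      (∀ v, sigB P.acts pat act β j v = chainB P.acts (ord.take (cnt f j)) β auxB v) ∧
      (∀ x, sigN P.acts pat act aux ν j x = chainN P.acts (ord.take (cnt f j)) ν auxN x) := by
    intro j
    induction j with
    | zero =>
        constructor
        · intro v; simp [sigB, cnt_zero, chainB]
        · intro x; simp [sigN, cnt_zero, chainN]
    | succ j ih =>
        rcases hpj : pat[j]? with _ | a
        · -- j ≥ pat.length : nothing happens
          have hlen : pat.length ≤ j := by
            exact List.getElem?_eq_none_iff.mp hpj
          have hnone : ∀ k : Fin ord.length, (f k : ℕ) ≠ j := by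
            intro k hk
            have := (f k).isLt
            omega
          have hcnt : cnt f (j + 1) = cnt f j := cnt_succ_none f hnone
          constructor
          · intro v; rw [hcnt, ← ih.1 v]; simp [sigB, hpj]
          · intro x; rw [hcnt, ← ih.2 x]; simp [sigN, hpj]
        · have hjlt : j < pat.length := by
            by_contra hle
            rw [List.getElem?_eq_none_iff.mpr (by omega)] at hpj
            cases hpj
          rcases hE : embIdx f j with _ | k
          · -- position j is not in the image of the embedding : act j = 0
            have hnone : ∀ k : Fin ord.length, (f k : ℕ) ≠ j := by
              intro k hk
              rw [embIdx_eq_some f hk] at hE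
              cases hE
            have hcnt : cnt f (j + 1) = cnt f j := cnt_succ_none f hnone
            have hact0 : act j = 0 := by rw [hactdef]; simp [hE]
            constructor
            · intro v
              rw [hcnt, ← ih.1 v]
              rcases hB : (P.acts a).effB v with _ | b
              · simp [sigB, hpj, hB]
              · cases b <;> simp [sigB, hpj, hB, hact0]
            · intro x
              rw [hcnt]
              rcases hN : (P.acts a).effN x with _ | e
              · rw [← ih.2 x]; simp [sigN, hpj, hN]
              · by_cases hinc : (P.acts a).isIncr x e
                · rw [← ih.2 x]; simp [sigN, hpj, hN, hinc, hact0]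
                · have : aux j x = chainN P.acts (ord.take (cnt f j)) ν auxN x := by
                    rw [hauxdef]; simp [hE]
                  rw [← this]; simp [sigN, hpj, hN, hinc]
          · -- position j is f k
            have hfk : (f k : ℕ) = j := embIdx_some hE
            have hak : ord.get k = a := by
              have h1 := hf k
              have h2 : pat.get (f k) = a := by
                have : pat.get ⟨j, hjlt⟩ = a := by
                  have := List.getElem?_eq_some_iff.mp hpj
                  rcases this with ⟨h, h'⟩
                  simpa [List.get_eq_getElem] using h'
                rw [← this]
                congr 1
                exact Fin.ext hfk
              rw [h1, h2]
            have hcnt1 : cnt f (j + 1) = cnt f j + 1 := cnt_succ_some f hfk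
            have hcntk : cnt f j = (k : ℕ) := cnt_emb f hfk
            have htake : ord.take ((k : ℕ) + 1) = ord.take (k : ℕ) ++ [a] := by
              rw [← hak]
              exact (List.take_concat_get' ord k k.isLt).symm
            have hbef : before ord a = ord.take (k : ℕ) := by
              rw [← hak]; exact before_eq_take hnd k
            have hsigN : sigN P.acts pat act aux ν j
                = chainN P.acts (ord.take (k : ℕ)) ν auxN := by
              funext x
              rw [ih.2 x, hcntk]
            have hsigB : ∀ v, sigB P.acts pat act β j v
                = chainB P.acts (ord.take (k : ℕ)) β auxB v := by
              intro v; rw [ih.1 v, hcntk]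
            rcases hb : actb a with _ | _
            · -- a is not executed : act j = 0, chain unchanged
              have hb' : actb (ord.get k) = false := by rw [hak]; exact hb
              have hact0 : act j = 0 := hact_false hE hb'
              constructor
              · intro v
                rw [hcnt1, hcntk, htake, chainB_concat]
                rcases hB : (P.acts a).effB v with _ | b
                · rw [if_neg (by simp [hB]), ← hsigB v]
                  simp [sigB, hpj, hB]
                · rw [if_pos (by simp [hB])]
                  have hfr := ((heffB a v b hB).2 hb)
                  rw [hfr, hbef, ← hsigB v]
                  cases b <;> simp [sigB, hpj, hB, hact0]
              · intro x
                rw [hcnt1, hcntk, htake, chainN_concat]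
                rcases hN : (P.acts a).effN x with _ | e
                · rw [if_neg (by simp [hN]), ← hsigN]
                  simp [sigN, hpj, hN]
                · rw [if_pos (by simp [hN])]
                  have hfr := ((heffN a x e hN).2 hb)
                  rw [hfr, hbef]
                  by_cases hinc : (P.acts a).isIncr x e
                  · rw [← congrFun hsigN x]
                    simp [sigN, hpj, hN, hinc, hact0]
                  · have : aux j x = chainN P.acts (ord.take (k : ℕ)) ν auxN x := by
                      rw [haux_false hE hb', hcntk]
                    rw [← this]
                    simp [sigN, hpj, hN, hinc]
            · -- a is executed : act j = 1
              have hb' : actb (ord.get k) = true := by rw [hak]; exact hb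
              have hact1 : act j = 1 := hact_true hE hb'
              constructor
              · intro v
                rw [hcnt1, hcntk, htake, chainB_concat]
                rcases hB : (P.acts a).effB v with _ | b
                · rw [if_neg (by simp [hB]), ← hsigB v]
                  simp [sigB, hpj, hB]
                · rw [if_pos (by simp [hB])]
                  have heq := ((heffB a v b hB).1 hb)
                  rw [heq]
                  cases b <;> simp [sigB, hpj, hB, hact1]
              · intro x
                rw [hcnt1, hcntk, htake, chainN_concat]
                rcases hN : (P.acts a).effN x with _ | e
                · rw [if_neg (by simp [hN]), ← hsigN]
                  simp [sigN, hpj, hN]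
                · rw [if_pos (by simp [hN])]
                  have heq := ((heffN a x e hN).1 hb)
                  rw [heq, hbef]
                  by_cases hinc : (P.acts a).isIncr x e
                  · have hc1 : e.coeff x = 1 := hinc.1
                    have := eval_incr e x hc1 (chainN P.acts (ord.take (k : ℕ)) ν auxN)
                    rw [this]
                    rw [show (sigN P.acts pat act aux ν (j+1) x) = sigN P.acts pat act aux ν j x
                        + (act j : ℚ) * (incrPart e x).eval (sigN P.acts pat act aux ν j) by
                      simp [sigN, hpj, hN, hinc]]
                    rw [hsigN, hact1]
                    push_cast
                    ring
                  · have : aux j x = auxN a x := by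
                      rw [haux_true hE hb', hak]
                    rw [show (sigN P.acts pat act aux ν (j+1) x) = aux j x by
                      simp [sigN, hpj, hN, hinc]]
                    rw [this, heq, hbef]
  -- helper for positions with positive action count
  have hposact : ∀ j, 0 < act j → ∃ k : Fin ord.length,
      (f k : ℕ) = j ∧ actb (ord.get k) = true ∧ cnt f j = (k : ℕ) := by
    intro j hj
    rcases hE : embIdx f j with _ | k
    · rw [hact_none hE] at hj; omega
    · rcases hbb : actb (ord.get k) with _ | _
      · rw [hact_false hE hbb] at hj; omega
      · exact ⟨k, embIdx_some hE, hbb, cnt_emb f (embIdx_some hE)⟩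
  refine ⟨act, aux, ?_, ?_, ?_⟩
  · intro j hj
    set a := pat.get ⟨j, hj⟩ with hadef
    have hgeta : ∀ k : Fin ord.length, (f k : ℕ) = j → ord.get k = a := by
      intro k hk
      rw [hf k, hadef]
      congr 1
      exact Fin.ext hk
    refine ⟨?_, ?_, ?_, ?_, fun _ => hactle j⟩
    · intro v hv hjpos
      obtain ⟨k, hk, hb, hck⟩ := hposact j hjpos
      have ha := hgeta k hk
      have := (hpre (ord.get k) hb).1 v (by rw [ha]; exact hv)
      rw [(INV j).1 v, hck, ← before_eq_take hnd k, this]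
    · intro v hv hjpos
      obtain ⟨k, hk, hb, hck⟩ := hposact j hjpos
      have ha := hgeta k hk
      have := (hpre (ord.get k) hb).2.1 v (by rw [ha]; exact hv)
      rw [(INV j).1 v, hck, ← before_eq_take hnd k, this]
    · intro c hc
      constructor
      · intro hjpos
        obtain ⟨k, hk, hb, hck⟩ := hposact j hjpos
        have ha := hgeta k hk
        have := (hpre (ord.get k) hb).2.2 c (by rw [ha]; exact hc)
        have hfun : sigN P.acts pat act aux ν j
            = chainN P.acts (before ord (ord.get k)) ν auxN := by
          funext x
          rw [(INV j).2 x, hck, ← before_eq_take hnd k]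
        rw [hfun]
        exact this
      · intro h1
        have := hactle j
        omega
    · intro x e hxe hninc
      constructor
      · intro hact0
        rcases hE : embIdx f j with _ | k
        · rw [haux_none hE, (INV j).2 x]
        · rcases hbb : actb (ord.get k) with _ | _
          · rw [haux_false hE hbb, (INV j).2 x]
          · rw [hact_true hE hbb] at hact0; omega
      · intro hjpos
        obtain ⟨k, hk, hb, hck⟩ := hposact j hjpos
        have ha := hgeta k hk
        have hEk : embIdx f j = some k := embIdx_eq_some f hk
        have haux : aux j x = auxN (ord.get k) x := haux_true hEk hb
        have heq := ((heffN (ord.get k) x e (by rw [ha]; exact hxe)).1 hb)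
        have hfun : sigN P.acts pat act aux ν j
            = chainN P.acts (before ord (ord.get k)) ν auxN := by
          funext y
          rw [(INV j).2 y, hck, ← before_eq_take hnd k]
        rw [haux, heq, hfun]
  · intro v
    rw [hfrB v, (INV pat.length).1 v, cnt_top f, List.take_length]
  · intro x
    rw [hfrN x, (INV pat.length).2 x, cnt_top f, List.take_length]

/-- for every pattern `≺` and total order `<` of the actions compatible
with `≺` (i.e. `<`, seen as a sequence, is obtained from `≺` by removing zero or more
actions, i.e. it is a sublist of `≺`), the pattern `≺`-encoding dominates the R²∃
`<`-encoding: for every bound `n`, if `Π^<_n` is satisfiable then `Π^≺_n` is satisfiable. -/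
theorem pattern_dominates_r2e
    {VB VN A : Type} [Fintype VB] [Fintype VN] [Fintype A]
    (P : Problem VB VN A) (pat : List A) (ord : List A)
    (hnd : ord.Nodup) (hall : ∀ a : A, a ∈ ord) (hcompat : ord.Sublist pat)
    (n : ℕ) (h : satLt P ord n) :
    satPat P pat n := by
  obtain ⟨m, h0, h1, hTs, hg⟩ := h
  choose act aux hstep using fun i : Fin n =>
    step_sim P pat ord hnd hcompat _ _ _ _ _ _ _ (hTs i)
  exact ⟨⟨m.β, m.ν, act, aux⟩, h0, h1, hstep, hg⟩
end PatternPlanning
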